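/- Suppose p = p(n) = c·(log n)/n + ξ(n) where ξ(n) = o((log n)/n) and c > 1 is fixed, and let t = t(n) = ⌊n·(log log n)/(log n)⌋. Then for every ε > 0, the probability that the number of indices j with X_t < j ≤ n such that v_j is NOT reachable from v_1 is at most ε·n tends to 1 as n → ∞. -/

import Mathlib

open MeasureTheory ProbabilityTheory Filter

/-- `IsInfOrderedRandomGraph μ edge p` says that, on the probability space `(Ω, μ)`, the
family `edge` of Boolean random variables models the infinite ordered directed random graph
with edge probability `p`: vertices are `0, 1, 2, …` (vertex `k` standing for `v_{k+1}`),
and for each pair `a < b` the indicator `edge a b` of the presence of the directed edge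
from `a` to `b` takes the value `true` with probability `p`, these indicators (for the
pairs `a < b`) forming a mutually independent family. -/
structure IsInfOrderedRandomGraph {Ω : Type*} [MeasurableSpace Ω] (μ : Measure Ω)
    (edge : ℕ → ℕ → Ω → Bool) (p : ℝ) : Prop where
  isProb : IsProbabilityMeasure μ
  meas : ∀ a b : ℕ, Measurable (edge a b)
  indep : iIndepFun
      (fun (e : {q : ℕ × ℕ // q.1 < q.2}) ω => edge e.1.1 e.1.2 ω) μ
  marginal : ∀ a b : ℕ, a < b → μ {ω | edge a b ω = true} = ENNReal.ofReal p

/-- Vertex `j` (i.e. `v_{j+1}`) is reachable from vertex `0` (i.e. `v_1`) by a directed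
path along present edges with strictly increasing indices. -/
def ReachableI {Ω : Type*} (edge : ℕ → ℕ → Ω → Bool) (ω : Ω) (j : ℕ) : Prop :=
  Relation.ReflTransGen (fun a b => a < b ∧ edge a b ω = true) 0 j

/-- `Xr edge ω i` is `X_i`: for `i ≥ 1`, the (1-based) index of the `i`-th reachable vertex
other than `v_1` (in increasing order of index), and `X_0 = 1` (the index of `v_1`).
Vertex `j` has 1-based index `j + 1`. -/
noncomputable def Xr {Ω : Type*} (edge : ℕ → ℕ → Ω → Bool) (ω : Ω) : ℕ → ℕ
  | 0 => 1
  | i + 1 => Nat.nth (fun j => 0 < j ∧ ReachableI edge ω j) i + 1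

-- `unreachedCount edge ω m n` is the number of (1-based) indices `j` with `m < j ≤ n` such
-- that `v_j` is NOT reachable from `v_1` (vertex `v_j` is `j - 1` in 0-based labelling).
open Classical in
noncomputable def unreachedCount {Ω : Type*} (edge : ℕ → ℕ → Ω → Bool) (ω : Ω)
    (m n : ℕ) : ℕ :=
  ((Finset.Ioc m n).filter fun j => ¬ ReachableI edge ω (j - 1)).card

section Aux

variable {Ω : Type*} {edge : ℕ → ℕ → Ω → Bool}

lemma reach_iff' (ω : Ω) (j : ℕ) :
    ReachableI edge ω j ↔ j = 0 ∨ ∃ a, a < j ∧ ReachableI edge ω a ∧ edge a j ω = true := by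
  constructor
  · intro h
    rcases Relation.ReflTransGen.cases_tail h with h | ⟨c, hc, hcb⟩
    · exact Or.inl h
    · exact Or.inr ⟨c, hcb.1, hc, hcb.2⟩
  · rintro (rfl | ⟨a, hlt, ha, he⟩)
    · exact Relation.ReflTransGen.refl
    · exact ha.tail ⟨hlt, he⟩

lemma reach_determined' {ω ω' : Ω} {m : ℕ}
    (h : ∀ a b, a < b → b < m → edge a b ω = edge a b ω') :
    ∀ k, k < m → ReachableI edge ω k → ReachableI edge ω' k := by
  intro k hk hr
  induction hr with
  | refl => exact Relation.ReflTransGen.refl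
  | @tail b c hb hbc ih =>
      exact (ih (lt_trans hbc.1 hk)).tail ⟨hbc.1, (h b c hbc.1 hk).symm ▸ hbc.2⟩

lemma measurableSet_reach [MeasurableSpace Ω] (hm : ∀ a b : ℕ, Measurable (edge a b)) (k : ℕ) :
    MeasurableSet {ω | ReachableI edge ω k} := by
  induction k using Nat.strong_induction_on with
  | _ k ih =>
    have h1 : {ω | ReachableI edge ω k}
        = {ω | k = 0 ∨ ∃ a, a < k ∧ ReachableI edge ω a ∧ edge a k ω = true} := by
      ext ω; exact reach_iff' ω k
    rw [h1]
    rcases Nat.eq_zero_or_pos k with rfl | hk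
    · simp
    · have h2 : {ω | k = 0 ∨ ∃ a, a < k ∧ ReachableI edge ω a ∧ edge a k ω = true}
          = ⋃ a ∈ Finset.range k, ({ω | ReachableI edge ω a} ∩ (edge a k) ⁻¹' {true}) := by
        ext ω
        simp only [Set.mem_setOf_eq, Set.mem_iUnion, Finset.mem_range, Set.mem_inter_iff,
          Set.mem_preimage, Set.mem_singleton_iff]
        constructor
        · rintro (rfl | ⟨a, hh1, hh2, hh3⟩); · omega
          exact ⟨a, hh1, hh2, hh3⟩
        · rintro ⟨a, hh1, hh2, hh3⟩; exact Or.inr ⟨a, hh1, hh2, hh3⟩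
      rw [h2]
      exact MeasurableSet.biUnion (Finset.range k).countable_toSet
        (fun a ha => (ih a (Finset.mem_range.mp ha)).inter ((hm a k) (by simp)))

lemma edge_false_meas [MeasurableSpace Ω] {μ : Measure Ω} {p : ℝ}
    (hG : IsInfOrderedRandomGraph μ edge p) {a b : ℕ} (hab : a < b) :
    μ {ω | edge a b ω = false} = 1 - ENNReal.ofReal p := by
  have : IsProbabilityMeasure μ := hG.isProb
  have h1 : {ω | edge a b ω = false} = {ω | edge a b ω = true}ᶜ := by
    ext ω; simp [Bool.not_eq_true]
  have h2 : MeasurableSet {ω | edge a b ω = true} := hG.meas a b (by simp : MeasurableSet {true})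
  rw [h1, measure_compl h2 (measure_ne_top μ _), hG.marginal a b hab, measure_univ]

open Classical in
lemma key_bound [MeasurableSpace Ω] {μ : Measure Ω} {p : ℝ}
    (hG : IsInfOrderedRandomGraph μ edge p) (t j : ℕ) :
    μ {ω | t + 1 ≤ ((Finset.range (j-1)).filter (fun k => ReachableI edge ω k)).card
        ∧ ¬ ReachableI edge ω (j-1)}
      ≤ (1 - ENNReal.ofReal p) ^ (t+1) := by
  have : IsProbabilityMeasure μ := hG.isProb
  set m := j - 1 with hm
  set F : Ω → Finset ℕ := fun ω => (Finset.range m).filter (fun k => ReachableI edge ω k)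
    with hF
  set P : Finset (Finset ℕ) := (Finset.range m).powerset.filter (fun R => t+1 ≤ R.card)
    with hP
  set E : Finset ℕ → Set Ω := fun R => {ω | F ω = R} with hE
  set N : Finset ℕ → Set Ω := fun R => {ω | ∀ r ∈ R, edge r m ω = false} with hN
  have hPsub : ∀ R ∈ P, R ⊆ Finset.range m := by
    intro R hR
    have := Finset.mem_filter.mp hR
    exact Finset.mem_powerset.mp this.1
  have hPcard : ∀ R ∈ P, t + 1 ≤ R.card := fun R hR => (Finset.mem_filter.mp hR).2
  have hincl : {ω | t + 1 ≤ (F ω).card ∧ ¬ ReachableI edge ω m}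
      ⊆ ⋃ R ∈ P, (E R ∩ N R) := by
    intro ω hω
    refine Set.mem_biUnion (show F ω ∈ P from ?_) ⟨rfl, ?_⟩
    · exact Finset.mem_filter.mpr ⟨Finset.mem_powerset.mpr (Finset.filter_subset _ _), hω.1⟩
    · intro r hr
      have hr' := Finset.mem_filter.mp hr
      have hrm := Finset.mem_range.mp hr'.1
      by_contra hfalse
      have he : edge r m ω = true := by
        cases h : edge r m ω
        · exact absurd h hfalse
        · rfl
      exact hω.2 (hr'.2.tail ⟨hrm, he⟩)
  have hERmeas : ∀ R, R ⊆ Finset.range m → MeasurableSet (E R) := by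
    intro R hR
    have hEeq : E R = ⋂ k ∈ Finset.range m,
        (if k ∈ R then {ω | ReachableI edge ω k} else {ω | ReachableI edge ω k}ᶜ) := by
      ext ω
      simp only [hE, Set.mem_setOf_eq, Set.mem_iInter]
      constructor
      · rintro rfl k hk
        by_cases hkR : k ∈ F ω
        · have h2 := Finset.mem_filter.mp hkR
          simp only [hkR, if_pos, Set.mem_setOf_eq]
          exact h2.2
        · simp only [hkR, if_neg, Set.mem_compl_iff, Set.mem_setOf_eq]
          intro hre
          exact hkR (Finset.mem_filter.mpr ⟨hk, hre⟩)
      · intro h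
        ext k
        simp only [hF, Finset.mem_filter, Finset.mem_range]
        constructor
        · rintro ⟨hk, hreach⟩
          have hk' := h k (Finset.mem_range.mpr hk)
          by_cases hkR : k ∈ R
          · exact hkR
          · simp only [hkR, if_neg, Set.mem_compl_iff, Set.mem_setOf_eq] at hk'
            exact absurd hreach hk'
        · intro hkR
          have hk : k < m := Finset.mem_range.mp (hR hkR)
          have hk' := h k (Finset.mem_range.mpr hk)
          simp only [hkR, if_pos, Set.mem_setOf_eq] at hk'
          exact ⟨hk, hk'⟩
    rw [hEeq]
    refine MeasurableSet.biInter (Finset.range m).countable_toSet (fun k _ => ?_)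
    by_cases hkR : k ∈ R
    · simpa [hkR] using measurableSet_reach hG.meas k
    · simpa [hkR] using (measurableSet_reach hG.meas k).compl
  have hprod : ∀ R ∈ P, μ (E R ∩ N R) = μ (E R) * μ (N R) := by
    intro R hRP
    have hRsub : R ⊆ Finset.range m := hPsub R hRP
    set f : {q : ℕ × ℕ // q.1 < q.2} → Ω → Bool := fun e ω => edge e.1.1 e.1.2 ω with hf
    set S : Finset {q : ℕ × ℕ // q.1 < q.2} :=
      (Finset.range m ×ˢ Finset.range m).subtype (fun q => q.1 < q.2) with hS
    set T : Finset {q : ℕ × ℕ // q.1 < q.2} :=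
      (R.image (fun r => (r, m))).subtype (fun q => q.1 < q.2) with hT
    have hdisj : Disjoint S T := by
      rw [Finset.disjoint_left]
      intro x hxS hxT
      have h1 := Finset.mem_product.mp (Finset.mem_subtype.mp hxS)
      obtain ⟨r, hr, heq⟩ := Finset.mem_image.mp (Finset.mem_subtype.mp hxT)
      have h2 : (x : ℕ × ℕ).2 = m := by rw [← heq]
      have h3 := Finset.mem_range.mp h1.2
      omega
    have hIndep : IndepFun (fun a (i : S) => f i a) (fun a (i : T) => f i a) μ :=
      hG.indep.indepFun_finset S T hdisj (fun e => hG.meas _ _)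
    set g : Ω → (S → Bool) := fun a i => f i a with hg
    set h : Ω → (T → Bool) := fun a i => f i a with hh
    have hEg : E R = g ⁻¹' (g '' E R) := by
      refine Set.Subset.antisymm (Set.subset_preimage_image g (E R)) ?_
      rintro ω ⟨ω', hω', hgω⟩
      have hagree : ∀ a b, a < b → b < m → edge a b ω' = edge a b ω := by
        intro a b hab hbm
        have hmem : (⟨(a, b), hab⟩ : {q : ℕ × ℕ // q.1 < q.2}) ∈ S :=
          Finset.mem_subtype.mpr (Finset.mem_product.mpr
            ⟨Finset.mem_range.mpr (lt_trans hab hbm), Finset.mem_range.mpr hbm⟩)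
        exact congrFun hgω ⟨⟨(a, b), hab⟩, hmem⟩
      have hagree' : ∀ a b, a < b → b < m → edge a b ω = edge a b ω' :=
        fun a b h1 h2 => (hagree a b h1 h2).symm
      simp only [hE, Set.mem_setOf_eq] at hω' ⊢
      rw [← hω']
      ext k
      simp only [hF, Finset.mem_filter, Finset.mem_range]
      constructor
      · rintro ⟨hk, hre⟩; exact ⟨hk, reach_determined' hagree' k hk hre⟩
      · rintro ⟨hk, hre⟩; exact ⟨hk, reach_determined' hagree k hk hre⟩
    have hNh : N R = h ⁻¹' (h '' N R) := by
      refine Set.Subset.antisymm (Set.subset_preimage_image h (N R)) ?_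
      rintro ω ⟨ω', hω', hhω⟩
      simp only [hN, Set.mem_setOf_eq] at hω' ⊢
      intro r hr
      have hrm : r < m := Finset.mem_range.mp (hRsub hr)
      have hmem : (⟨(r, m), hrm⟩ : {q : ℕ × ℕ // q.1 < q.2}) ∈ T :=
        Finset.mem_subtype.mpr (Finset.mem_image.mpr ⟨r, hr, rfl⟩)
      have hc := congrFun hhω ⟨⟨(r, m), hrm⟩, hmem⟩
      exact hc.symm.trans (hω' r hr)
    have hmA : MeasurableSet (g '' E R) := (Set.toFinite _).measurableSet
    have hmB : MeasurableSet (h '' N R) := (Set.toFinite _).measurableSet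
    calc μ (E R ∩ N R) = μ (g ⁻¹' (g '' E R) ∩ h ⁻¹' (h '' N R)) := by rw [← hEg, ← hNh]
      _ = μ (g ⁻¹' (g '' E R)) * μ (h ⁻¹' (h '' N R)) :=
          hIndep.measure_inter_preimage_eq_mul _ _ hmA hmB
      _ = μ (E R) * μ (N R) := by rw [← hEg, ← hNh]
  have hNval : ∀ R ∈ P, μ (N R) = (1 - ENNReal.ofReal p) ^ R.card := by
    intro R hRP
    have hRsub : R ⊆ Finset.range m := hPsub R hRP
    set T : Finset {q : ℕ × ℕ // q.1 < q.2} :=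
      (R.image (fun r => (r, m))).subtype (fun q => q.1 < q.2) with hT
    have hNT : N R = ⋂ i ∈ T, {ω | edge (i : ℕ × ℕ).1 (i : ℕ × ℕ).2 ω = false} := by
      ext ω
      simp only [hN, Set.mem_setOf_eq, Set.mem_iInter]
      constructor
      · intro hall i hmem
        obtain ⟨r, hr, heq⟩ := Finset.mem_image.mp (Finset.mem_subtype.mp hmem)
        have h1 : (i : ℕ × ℕ).1 = r := by rw [← heq]
        have h2 : (i : ℕ × ℕ).2 = m := by rw [← heq]
        rw [h1, h2]
        exact hall r hr
      · intro hall r hr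
        have hrm : r < m := Finset.mem_range.mp (hRsub hr)
        exact hall ⟨(r, m), hrm⟩
          (Finset.mem_subtype.mpr (Finset.mem_image.mpr ⟨r, hr, rfl⟩))
    have hbi := hG.indep.meas_biInter (S := T)
      (s := fun i => {ω | edge (i : ℕ × ℕ).1 (i : ℕ × ℕ).2 ω = false})
      (fun i _ => ⟨{false}, (measurableSet_singleton false), by ext ω; simp⟩)
    rw [hNT, hbi]
    have hTval : ∀ i ∈ T, μ {ω | edge (i : ℕ × ℕ).1 (i : ℕ × ℕ).2 ω = false}
        = 1 - ENNReal.ofReal p := fun i _ => edge_false_meas hG i.2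
    rw [Finset.prod_congr rfl hTval, Finset.prod_const]
    congr 1
    have hall : ∀ q ∈ R.image (fun r => (r, m)), (q : ℕ × ℕ).1 < q.2 := by
      intro q hq
      obtain ⟨r, hr, heq⟩ := Finset.mem_image.mp hq
      have hrm : r < m := Finset.mem_range.mp (hRsub hr)
      rw [← heq]
      exact hrm
    rw [hT, Finset.card_subtype, Finset.filter_true_of_mem hall]
    exact Finset.card_image_of_injective _
      (fun a b hab => ((Prod.mk.injEq _ _ _ _).mp hab).1)
  have hEdisj : (↑P : Set (Finset ℕ)).PairwiseDisjoint E := by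
    intro R1 _ R2 _ hne
    simp only [Set.disjoint_left]
    rintro ω h1 h2
    exact hne (h1.symm.trans h2)
  have hsum : ∑ R ∈ P, μ (E R) ≤ 1 := by
    rw [← measure_biUnion_finset hEdisj (fun R hR => hERmeas R (hPsub R hR))]
    exact prob_le_one
  have main : μ (⋃ R ∈ P, (E R ∩ N R)) ≤ (1 - ENNReal.ofReal p) ^ (t+1) :=
    calc μ (⋃ R ∈ P, (E R ∩ N R))
        ≤ ∑ R ∈ P, μ (E R ∩ N R) := measure_biUnion_finset_le P _
      _ = ∑ R ∈ P, μ (E R) * μ (N R) := Finset.sum_congr rfl hprod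
      _ ≤ ∑ R ∈ P, μ (E R) * (1 - ENNReal.ofReal p) ^ (t+1) := by
          refine Finset.sum_le_sum (fun R hR => ?_)
          rw [hNval R hR]
          exact mul_le_mul_right
            (pow_le_pow_of_le_one (zero_le) tsub_le_self (hPcard R hR)) _
      _ = (∑ R ∈ P, μ (E R)) * (1 - ENNReal.ofReal p) ^ (t+1) := by
          rw [Finset.sum_mul]
      _ ≤ 1 * (1 - ENNReal.ofReal p) ^ (t+1) := mul_le_mul_left hsum _
      _ = (1 - ENNReal.ofReal p) ^ (t+1) := one_mul _
  exact le_trans (measure_mono hincl) main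

/-- The set of ω whose whole positive reachable set is finite is null. -/
lemma finite_reach_null [MeasurableSpace Ω] {μ : Measure Ω} {p : ℝ}
    (hG : IsInfOrderedRandomGraph μ edge p) (hp : 0 < p) :
    μ {ω | ({j | 0 < j ∧ ReachableI edge ω j}).Finite} = 0 := by
  have : IsProbabilityMeasure μ := hG.isProb
  set D : ℕ → Set Ω := fun m => {ω | ∀ i, m < i → edge 0 i ω = false} with hD
  have hsub : {ω | ({j | 0 < j ∧ ReachableI edge ω j}).Finite} ⊆ ⋃ m, D m := by
    intro ω hω
    have hfin : {j | 0 < j ∧ edge 0 j ω = true}.Finite := by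
      refine Set.Finite.subset hω ?_
      rintro i ⟨h0i, hi⟩
      exact ⟨h0i, Relation.ReflTransGen.single ⟨h0i, hi⟩⟩
    obtain ⟨m, hmub⟩ := hfin.bddAbove
    refine Set.mem_iUnion.mpr ⟨m, fun i hi => ?_⟩
    cases h : edge 0 i ω
    · rfl
    · exact absurd (hmub ⟨by omega, h⟩) (by omega)
  refine le_antisymm (le_trans (measure_mono hsub) ?_) (zero_le)
  calc μ (⋃ m, D m) ≤ ∑' m, μ (D m) := measure_iUnion_le D
    _ ≤ ∑' (m : ℕ), (0 : ENNReal) := by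
        refine ENNReal.tsum_le_tsum (fun m => ?_)
        have hbound : ∀ k : ℕ, μ (D m) ≤ (1 - ENNReal.ofReal p) ^ k := by
          intro k
          have hsub2 : D m ⊆ ⋂ i ∈ Finset.Ioc m (m + k), {ω | edge 0 i ω = false} := by
            intro ω hω
            simp only [Set.mem_iInter]
            intro i hi
            exact hω i (Finset.mem_Ioc.mp hi).1
          refine le_trans (measure_mono hsub2) ?_
          set T : Finset {q : ℕ × ℕ // q.1 < q.2} :=
            ((Finset.Ioc m (m + k)).image (fun i => (0, i))).subtype (fun q => q.1 < q.2)
            with hT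
          have hIoc : ⋂ i ∈ Finset.Ioc m (m + k), {ω | edge 0 i ω = false}
              = ⋂ e ∈ T, {ω | edge (e : ℕ × ℕ).1 (e : ℕ × ℕ).2 ω = false} := by
            ext ω
            simp only [Set.mem_iInter]
            constructor
            · intro hall e he
              obtain ⟨i, hi, heq⟩ := Finset.mem_image.mp (Finset.mem_subtype.mp he)
              have h1 : (e : ℕ × ℕ).1 = 0 := by rw [← heq]
              have h2 : (e : ℕ × ℕ).2 = i := by rw [← heq]
              rw [h1, h2]; exact hall i hi
            · intro hall i hi
              have h0i : 0 < i := by have := (Finset.mem_Ioc.mp hi).1; omega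
              exact hall ⟨(0, i), h0i⟩
                (Finset.mem_subtype.mpr (Finset.mem_image.mpr ⟨i, hi, rfl⟩))
          rw [hIoc, hG.indep.meas_biInter
            (fun e _ => ⟨{false}, measurableSet_singleton false, by ext ω; simp⟩)]
          have hval : ∀ e ∈ T, μ {ω | edge (e : ℕ × ℕ).1 (e : ℕ × ℕ).2 ω = false}
              = 1 - ENNReal.ofReal p := fun e _ => edge_false_meas hG e.2
          rw [Finset.prod_congr rfl hval, Finset.prod_const]
          refine pow_le_pow_of_le_one (zero_le) tsub_le_self ?_
          have hcard : T.card = k := by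
            rw [hT, Finset.card_subtype, Finset.filter_true_of_mem (by
              intro q hq
              obtain ⟨i, hi, heq⟩ := Finset.mem_image.mp hq
              have := (Finset.mem_Ioc.mp hi).1
              rw [← heq]
              simpa using by omega)]
            rw [Finset.card_image_of_injective _
              (fun a b hab => ((Prod.mk.injEq _ _ _ _).mp hab).2)]
            simp
          omega
        have hlt : (1 - ENNReal.ofReal p) < 1 := by
          refine ENNReal.sub_lt_self ENNReal.one_ne_top one_ne_zero ?_
          simpa using hp
        exact ge_of_tendsto' (ENNReal.tendsto_pow_atTop_nhds_zero_of_lt_one hlt) hbound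
    _ = 0 := by simp

open Classical in
/-- Deterministic counting bound, valid when the reachable set is infinite. -/
lemma count_le_cnt {ω : Ω} (t n : ℕ)
    (hinf : {j | 0 < j ∧ ReachableI edge ω j}.Infinite) :
    unreachedCount edge ω (Xr edge ω t) n
      ≤ ((Finset.Ioc 1 n).filter (fun j =>
          t + 1 ≤ ((Finset.range (j-1)).filter (fun k => ReachableI edge ω k)).card
            ∧ ¬ ReachableI edge ω (j-1))).card := by
  set Q : ℕ → Prop := fun k => 0 < k ∧ ReachableI edge ω k with hQ
  have hXpos : 1 ≤ Xr edge ω t := by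
    cases t <;> simp [Xr]
  refine Finset.card_le_card ?_
  intro j hj
  have hj' := Finset.mem_filter.mp hj
  have hjIoc := Finset.mem_Ioc.mp hj'.1
  have hj2 : 2 ≤ j := by omega
  refine Finset.mem_filter.mpr ⟨Finset.mem_Ioc.mpr ⟨by omega, hjIoc.2⟩, ?_, hj'.2⟩
  -- the t+1 reachable vertices below j-1
  have hmono := Nat.nth_strictMono (p := Q) hinf
  have hmem : ∀ i, Q (Nat.nth Q i) := Nat.nth_mem_of_infinite hinf
  have hsubs : insert 0 ((Finset.range t).image (Nat.nth Q))
      ⊆ (Finset.range (j-1)).filter (fun k => ReachableI edge ω k) := by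
    intro x hx
    rcases Finset.mem_insert.mp hx with rfl | hx
    · exact Finset.mem_filter.mpr ⟨Finset.mem_range.mpr (by omega),
        Relation.ReflTransGen.refl⟩
    · obtain ⟨i, hi, rfl⟩ := Finset.mem_image.mp hx
      have hit : i < t := Finset.mem_range.mp hi
      have ht1 : 1 ≤ t := by omega
      have hXr : Xr edge ω t = Nat.nth Q (t - 1) + 1 := by
        obtain ⟨t', rfl⟩ : ∃ t', t = t' + 1 := ⟨t - 1, by omega⟩
        simp [Xr]
        rfl
      have hnth_le : Nat.nth Q i ≤ Nat.nth Q (t - 1) := by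
        rcases eq_or_lt_of_le (by omega : i ≤ t - 1) with rfl | hlt
        · exact le_refl _
        · exact le_of_lt (hmono hlt)
      have hXj : Xr edge ω t < j := hjIoc.1
      refine Finset.mem_filter.mpr ⟨Finset.mem_range.mpr (by omega), (hmem i).2⟩
  have hcard : (insert 0 ((Finset.range t).image (Nat.nth Q))).card = t + 1 := by
    rw [Finset.card_insert_of_notMem (by
      intro h0
      obtain ⟨i, _, heq⟩ := Finset.mem_image.mp h0
      have := (hmem i).1
      omega)]
    rw [Finset.card_image_of_injective _ hmono.injective, Finset.card_range]
  calc t + 1 = (insert 0 ((Finset.range t).image (Nat.nth Q))).card := hcard.symm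
    _ ≤ _ := Finset.card_le_card hsubs

end Aux

open Asymptotics in
/-- Suppose `p n = c·(log n)/n + ξ n` with `ξ = o((log n)/n)` and `c > 1`
fixed, and let `t n = ⌊n·(log log n)/(log n)⌋`.  Then for every `ε > 0`, the probability
that the number of indices `j` with `X_{t n} < j ≤ n` such that `v_j` is not reachable from
`v_1` is at most `ε·n` tends to `1` as `n → ∞`. -/
theorem unreached_above_X_t_aas {Ω : ℕ → Type*} [∀ n, MeasurableSpace (Ω n)]
    (μ : ∀ n, Measure (Ω n)) (edge : ∀ n, ℕ → ℕ → Ω n → Bool)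
    (c : ℝ) (hc : 1 < c) (p ξ : ℕ → ℝ)
    (hξ : ξ =o[atTop] fun n : ℕ => Real.log n / n)
    (hp : ∀ n : ℕ, p n = c * Real.log n / n + ξ n)
    (hG : ∀ n : ℕ, IsInfOrderedRandomGraph (μ n) (edge n) (p n))
    (t : ℕ → ℕ) (ht : ∀ n : ℕ, t n = ⌊(n : ℝ) * Real.log (Real.log n) / Real.log n⌋₊)
    (ε : ℝ) (hε : 0 < ε) :
    Tendsto (fun n : ℕ => μ n
        {ω | (unreachedCount (edge n) ω (Xr (edge n) ω (t n)) n : ℝ) ≤ ε * n})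
      atTop (nhds 1) := by
  classical
  have hprob : ∀ n, IsProbabilityMeasure (μ n) := fun n => (hG n).isProb
  -- p n ≤ 1 always
  have hp1 : ∀ n, p n ≤ 1 := by
    intro n
    have h := (hG n).marginal 0 1 (by omega)
    have : ENNReal.ofReal (p n) ≤ 1 := by
      rw [← h]
      exact prob_le_one
    exact ENNReal.ofReal_le_one.mp this
  -- eventually p n is at least (log n)/n, hence positive
  have hplb : ∀ᶠ n : ℕ in atTop, Real.log n / n ≤ p n ∧ 0 < p n := by
    have hev := hξ.def (by linarith : (0:ℝ) < (c-1)/2)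
    filter_upwards [hev, eventually_ge_atTop 3] with n hn h3
    have hn3 : (3:ℝ) ≤ (n:ℝ) := by exact_mod_cast h3
    have hlogpos : 0 < Real.log n := Real.log_pos (by linarith)
    have hnpos : (0:ℝ) < n := by linarith
    have hlnn : 0 < Real.log n / n := by positivity
    have hnorm : ‖Real.log n / n‖ = Real.log n / n := Real.norm_of_nonneg (le_of_lt hlnn)
    rw [hnorm] at hn
    have habs : |ξ n| ≤ (c-1)/2 * (Real.log n / n) := by
      rw [← Real.norm_eq_abs]; exact hn
    have hξlb := (abs_le.mp habs).1
    have hple : Real.log n / n ≤ p n := by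
      rw [hp n]
      have h1 : c * Real.log ↑n / ↑n = c * (Real.log ↑n / ↑n) := by ring
      rw [h1]
      nlinarith [hlnn]
    exact ⟨hple, lt_of_lt_of_le hlnn hple⟩
  -- p n * (t n + 1) tends to infinity
  have hpt : Tendsto (fun n : ℕ => p n * ((t n : ℝ) + 1)) atTop atTop := by
    have hlb : ∀ᶠ n : ℕ in atTop,
        Real.log (Real.log n) ≤ p n * ((t n : ℝ) + 1) := by
      filter_upwards [hplb, eventually_ge_atTop 3] with n hn h3
      have hn3 : (3:ℝ) ≤ (n:ℝ) := by exact_mod_cast h3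
      have hlog1 : 1 < Real.log n := by
        have : Real.log (Real.exp 1) < Real.log n := by
          refine Real.log_lt_log (Real.exp_pos 1) ?_
          have := Real.exp_one_lt_d9
          linarith
        simpa using this
      have hloglog0 : 0 ≤ Real.log (Real.log n) := Real.log_nonneg (le_of_lt hlog1)
      have hnpos : (0:ℝ) < n := by linarith
      have htlb : (n : ℝ) * Real.log (Real.log n) / Real.log n ≤ (t n : ℝ) + 1 := by
        rw [ht n]
        exact le_of_lt (Nat.lt_floor_add_one _)
      have heq : (Real.log n / n) * ((n : ℝ) * Real.log (Real.log n) / Real.log n)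
          = Real.log (Real.log n) := by
        field_simp
      calc Real.log (Real.log n)
          = (Real.log n / n) * ((n : ℝ) * Real.log (Real.log n) / Real.log n) := heq.symm
        _ ≤ p n * ((t n : ℝ) + 1) := by
            refine mul_le_mul hn.1 htlb ?_ (le_of_lt hn.2)
            positivity
    refine tendsto_atTop_mono' atTop hlb ?_
    exact (Real.tendsto_log_atTop.comp Real.tendsto_log_atTop).comp
      tendsto_natCast_atTop_atTop
  -- the dominating sequence
  set r : ℕ → ENNReal := fun n =>
    ENNReal.ofReal (Real.exp (-(p n * ((t n : ℝ) + 1))) / ε) with hr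
  have hrzero : Tendsto r atTop (nhds 0) := by
    have h1 : Tendsto (fun n : ℕ => Real.exp (-(p n * ((t n : ℝ) + 1))) / ε)
        atTop (nhds 0) := by
      have := (Real.tendsto_exp_neg_atTop_nhds_zero.comp hpt).div_const ε
      simpa using this
    have := (ENNReal.tendsto_ofReal h1)
    simpa using this
  -- the central estimate
  have hmain : ∀ᶠ n : ℕ in atTop,
      μ n {ω | ¬ ((unreachedCount (edge n) ω (Xr (edge n) ω (t n)) n : ℝ) ≤ ε * n)}
        ≤ r n := by
    filter_upwards [hplb, eventually_ge_atTop 1] with n hpn hn1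
    have hn1' : (1:ℝ) ≤ (n:ℝ) := by exact_mod_cast hn1
    have hεn : 0 < ε * n := by positivity
    set Gset : ℕ → Set (Ω n) := fun j => {ω |
        t n + 1 ≤ ((Finset.range (j-1)).filter (fun k => ReachableI (edge n) ω k)).card
          ∧ ¬ ReachableI (edge n) ω (j-1)} with hGset
    have hGmeas : ∀ j, MeasurableSet (Gset j) := by
      intro j
      have hcardmeas : Measurable (fun ω =>
          ((Finset.range (j-1)).filter (fun k => ReachableI (edge n) ω k)).card) := by
        have : (fun ω =>
            ((Finset.range (j-1)).filter (fun k => ReachableI (edge n) ω k)).card)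
            = fun ω => ∑ k ∈ Finset.range (j-1),
                (if ReachableI (edge n) ω k then 1 else 0) := by
          funext ω
          rw [Finset.card_filter]
        rw [this]
        refine Finset.measurable_sum _ (fun k _ => ?_)
        exact Measurable.ite (measurableSet_reach (hG n).meas k)
          measurable_const measurable_const
      exact (hcardmeas measurableSet_Ici).inter
        (measurableSet_reach (hG n).meas (j-1)).compl
    set fE : Ω n → ENNReal := fun ω => ∑ j ∈ Finset.Ioc 1 n,
      (Gset j).indicator (1 : Ω n → ENNReal) ω with hfE
    have hfEmeas : Measurable fE :=
      Finset.measurable_sum _ (fun j _ =>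
        measurable_one.indicator (hGmeas j))
    set cnt : Ω n → ℕ := fun ω => ((Finset.Ioc 1 n).filter (fun j =>
        t n + 1 ≤ ((Finset.range (j-1)).filter (fun k => ReachableI (edge n) ω k)).card
          ∧ ¬ ReachableI (edge n) ω (j-1))).card with hcnt
    have hcntfE : ∀ ω, (cnt ω : ENNReal) = fE ω := by
      intro ω
      rw [hcnt]
      simp only
      rw [Finset.card_filter, Nat.cast_sum]
      refine Finset.sum_congr rfl (fun j hj => ?_)
      by_cases hωj : ω ∈ Gset j
      · have hωj' := hωj
        simp only [hGset, Set.mem_setOf_eq] at hωj'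
        simp [Set.indicator_apply, hωj, hωj']
      · have hωj' := hωj
        simp only [hGset, Set.mem_setOf_eq] at hωj'
        simp [Set.indicator_apply, hωj, hωj']
        exact fun h => Classical.byContradiction fun h' => hωj' ⟨h, h'⟩
    -- the Bad event splits
    set Bfin : Set (Ω n) :=
      {ω | ({j | 0 < j ∧ ReachableI (edge n) ω j}).Finite} with hBfin
    have hsplit : {ω | ¬ ((unreachedCount (edge n) ω (Xr (edge n) ω (t n)) n : ℝ) ≤ ε * n)}
        ⊆ Bfin ∪ {ω | ENNReal.ofReal (ε * n) ≤ fE ω} := by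
      intro ω hω
      simp only [Set.mem_setOf_eq, not_le] at hω
      by_cases hfin : ({j | 0 < j ∧ ReachableI (edge n) ω j}).Finite
      · exact Or.inl hfin
      · refine Or.inr ?_
        have hle := count_le_cnt (edge := edge n) (ω := ω) (t n) n
          hfin
        have hcle : (unreachedCount (edge n) ω (Xr (edge n) ω (t n)) n : ℝ) ≤ (cnt ω : ℝ) := by
          exact_mod_cast hle
        have : ε * n ≤ (cnt ω : ℝ) := le_trans (le_of_lt hω) hcle
        calc ENNReal.ofReal (ε * n) ≤ ENNReal.ofReal ((cnt ω : ℝ)) :=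
              ENNReal.ofReal_le_ofReal this
          _ = (cnt ω : ENNReal) := ENNReal.ofReal_natCast _
          _ = fE ω := hcntfE ω
    -- Markov
    have hlint : ∫⁻ ω, fE ω ∂(μ n) ≤ (n : ENNReal) * (1 - ENNReal.ofReal (p n)) ^ (t n + 1) := by
      rw [hfE]
      rw [lintegral_finset_sum _ (fun j _ =>
        measurable_one.indicator (hGmeas j))]
      have hstep : ∀ j ∈ Finset.Ioc 1 n,
          ∫⁻ ω, (Gset j).indicator (1 : Ω n → ENNReal) ω ∂(μ n)
            ≤ (1 - ENNReal.ofReal (p n)) ^ (t n + 1) := by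
        intro j hj
        rw [lintegral_indicator_one (hGmeas j)]
        exact key_bound (hG n) (t n) j
      calc ∑ j ∈ Finset.Ioc 1 n, ∫⁻ ω, (Gset j).indicator (1 : Ω n → ENNReal) ω ∂(μ n)
          ≤ ∑ j ∈ Finset.Ioc 1 n, (1 - ENNReal.ofReal (p n)) ^ (t n + 1) :=
            Finset.sum_le_sum hstep
        _ = ((Finset.Ioc 1 n).card : ENNReal) * (1 - ENNReal.ofReal (p n)) ^ (t n + 1) := by
            rw [Finset.sum_const, nsmul_eq_mul]
        _ ≤ (n : ENNReal) * (1 - ENNReal.ofReal (p n)) ^ (t n + 1) := by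
            refine mul_le_mul_left ?_ _
            have : (Finset.Ioc 1 n).card ≤ n := by
              rw [Nat.card_Ioc]; omega
            exact_mod_cast this
    have ha0 : ENNReal.ofReal (ε * n) ≠ 0 := by
      simp only [ne_eq, ENNReal.ofReal_eq_zero, not_le]
      exact hεn
    have hatop : ENNReal.ofReal (ε * n) ≠ ⊤ := ENNReal.ofReal_ne_top
    have hmarkov : μ n {ω | ENNReal.ofReal (ε * n) ≤ fE ω}
        ≤ (∫⁻ ω, fE ω ∂(μ n)) / ENNReal.ofReal (ε * n) := by
      rw [ENNReal.le_div_iff_mul_le (Or.inl ha0) (Or.inl hatop)]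
      rw [mul_comm]
      exact mul_meas_ge_le_lintegral₀ hfEmeas.aemeasurable _
    have hBnull : μ n Bfin = 0 := finite_reach_null (hG n) hpn.2
    -- final numeric computation
    have hnum : (n : ENNReal) * (1 - ENNReal.ofReal (p n)) ^ (t n + 1)
        / ENNReal.ofReal (ε * n) ≤ r n := by
      have hp0 : 0 ≤ p n := le_of_lt hpn.2
      have hq : (1 : ENNReal) - ENNReal.ofReal (p n) = ENNReal.ofReal (1 - p n) := by
        rw [ENNReal.ofReal_sub _ hp0, ENNReal.ofReal_one]
      have hppow : ((1:ENNReal) - ENNReal.ofReal (p n)) ^ (t n + 1)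
          = ENNReal.ofReal ((1 - p n) ^ (t n + 1)) := by
        rw [hq, ENNReal.ofReal_pow (by linarith [hp1 n])]
      have hexp : (1 - p n) ^ (t n + 1) ≤ Real.exp (-(p n * ((t n : ℝ) + 1))) := by
        have h1 : 1 - p n ≤ Real.exp (-(p n)) := by
          have := Real.add_one_le_exp (-(p n))
          linarith
        have h2 : (1 - p n) ^ (t n + 1) ≤ (Real.exp (-(p n))) ^ (t n + 1) :=
          pow_le_pow_left₀ (by linarith [hp1 n]) h1 _
        have h3 : (Real.exp (-(p n))) ^ (t n + 1)
            = Real.exp (((t n + 1 : ℕ) : ℝ) * (-(p n))) := (Real.exp_nat_mul _ _).symm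
        rw [h3] at h2
        refine le_trans h2 (le_of_eq ?_)
        congr 1
        push_cast
        ring
      calc (n : ENNReal) * (1 - ENNReal.ofReal (p n)) ^ (t n + 1) / ENNReal.ofReal (ε * n)
          = ENNReal.ofReal ((n : ℝ) * (1 - p n) ^ (t n + 1)) / ENNReal.ofReal (ε * n) := by
            rw [hppow, ← ENNReal.ofReal_natCast n, ← ENNReal.ofReal_mul (by positivity)]
        _ = ENNReal.ofReal ((n : ℝ) * (1 - p n) ^ (t n + 1) / (ε * n)) :=
            (ENNReal.ofReal_div_of_pos hεn).symm
        _ ≤ ENNReal.ofReal ((n : ℝ) * Real.exp (-(p n * ((t n : ℝ) + 1))) / (ε * n)) := by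
            refine ENNReal.ofReal_le_ofReal ?_
            gcongr
        _ = r n := by
            rw [hr]
            congr 1
            have hne : (n:ℝ) ≠ 0 := by linarith
            field_simp
    calc μ n {ω | ¬ ((unreachedCount (edge n) ω (Xr (edge n) ω (t n)) n : ℝ) ≤ ε * n)}
        ≤ μ n (Bfin ∪ {ω | ENNReal.ofReal (ε * n) ≤ fE ω}) := measure_mono hsplit
      _ ≤ μ n Bfin + μ n {ω | ENNReal.ofReal (ε * n) ≤ fE ω} := measure_union_le _ _
      _ = μ n {ω | ENNReal.ofReal (ε * n) ≤ fE ω} := by rw [hBnull, zero_add]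
      _ ≤ (∫⁻ ω, fE ω ∂(μ n)) / ENNReal.ofReal (ε * n) := hmarkov
      _ ≤ (n : ENNReal) * (1 - ENNReal.ofReal (p n)) ^ (t n + 1) / ENNReal.ofReal (ε * n) :=
          ENNReal.div_le_div_right hlint _
      _ ≤ r n := hnum
  -- conclude by squeezing
  have hup : ∀ n : ℕ, μ n
      {ω | (unreachedCount (edge n) ω (Xr (edge n) ω (t n)) n : ℝ) ≤ ε * n} ≤ 1 :=
    fun n => prob_le_one
  have hlow : ∀ᶠ n : ℕ in atTop, 1 - r n ≤ μ n
      {ω | (unreachedCount (edge n) ω (Xr (edge n) ω (t n)) n : ℝ) ≤ ε * n} := by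
    filter_upwards [hmain] with n hn
    have huniv : (1 : ENNReal) ≤ μ n
        {ω | (unreachedCount (edge n) ω (Xr (edge n) ω (t n)) n : ℝ) ≤ ε * n}
        + μ n {ω | ¬ ((unreachedCount (edge n) ω (Xr (edge n) ω (t n)) n : ℝ) ≤ ε * n)} := by
      have hcover : (Set.univ : Set (Ω n)) =
          {ω | (unreachedCount (edge n) ω (Xr (edge n) ω (t n)) n : ℝ) ≤ ε * n}
          ∪ {ω | ¬ ((unreachedCount (edge n) ω (Xr (edge n) ω (t n)) n : ℝ) ≤ ε * n)} := by
        ext ω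
        simp only [Set.mem_univ, Set.mem_union, Set.mem_setOf_eq, true_iff]
        exact em _
      calc (1 : ENNReal) = μ n Set.univ := (measure_univ).symm
        _ = μ n (_ ∪ _) := by rw [← hcover]
        _ ≤ _ := measure_union_le _ _
    have h2 : (1 : ENNReal) - r n ≤ 1 - μ n
        {ω | ¬ ((unreachedCount (edge n) ω (Xr (edge n) ω (t n)) n : ℝ) ≤ ε * n)} :=
      tsub_le_tsub_left hn 1
    refine le_trans h2 ?_
    rw [tsub_le_iff_right]
    exact le_trans huniv (by rw [add_comm])
  have h1r : Tendsto (fun n => (1 : ENNReal) - r n) atTop (nhds 1) := by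
    have := ENNReal.Tendsto.sub
      (tendsto_const_nhds : Tendsto (fun _ : ℕ => (1:ENNReal)) atTop (nhds 1)) hrzero
      (Or.inl ENNReal.one_ne_top)
    simpa using this
  exact tendsto_of_tendsto_of_tendsto_of_le_of_le' h1r tendsto_const_nhds hlow
    (Eventually.of_forall hup)
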